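/- arXiv:2411.04479 — 2 statements merged into one kernel-verified Lean document; each statement's English description precedes it below -/
import Mathlib

section
/- In the fractal star matrix M_{q,m}, every column contains each value of Z_q the same number of times; specifically, a column whose size (number of numerical entries) is q^k contains each value of Z_q exactly q^{k-1} times. -/
/-- The subcube of `(Z_q)^C` defined by a star pattern `p` (`none` = `*`):
all vectors agreeing with `p` on every coordinate where `p` is numerical. -/
def Subcube {q : ℕ} {C : Type} (p : C → Option (ZMod q)) : Set (C → ZMod q) :=
  {x | ∀ c : C, ∀ a : ZMod q, p c = some a → x c = a}

/-- The number of numerical entries of a star pattern. -/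
noncomputable def numCount {q : ℕ} {C : Type} (p : C → Option (ZMod q)) : ℕ :=
  Nat.card {c : C // (p c).isSome}

/-- The rows of the star matrix `M` define pairwise disjoint subcubes covering the cube. -/
def IsPartitionMatrix (q : ℕ) {R C : Type} (M : R → C → Option (ZMod q)) : Prop :=
  (∀ r r' : R, r ≠ r' → Subcube (M r) ∩ Subcube (M r') = ∅) ∧
  (∀ x : C → ZMod q, ∃ r : R, x ∈ Subcube (M r))

/-- A star matrix is A-primitive if every column has at least one numerical entry. -/
def APrimitive {q : ℕ} {R C : Type} (M : R → C → Option (ZMod q)) : Prop :=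
  ∀ c : C, ∃ r : R, (M r c).isSome

/-- Number of rows of the fractal matrix `M_{q,m}`. -/
def Nrows (q : ℕ) : ℕ → ℕ
  | 0 => 1
  | m + 1 => q * Nrows q m

/-- Number of columns of the fractal matrix `M_{q,m}`. -/
def Ncols (q : ℕ) : ℕ → ℕ
  | 0 => 0
  | m + 1 => 1 + q * Ncols q m

/-- Entry of the fractal matrix `M_{q,m}` in row `r`, column `c` (as natural number
indices): `M_{q,0}` has one row and no columns; `M_{q,m+1}` consists of `q` horizontal
stripes indexed by `a ∈ Z_q`, stripe `a` having the constant value `a` in the first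
column, a copy of `M_{q,m}` in the `a`-th of `q` column blocks, and all-stars elsewhere. -/
def fractalEntry (q : ℕ) : ℕ → ℕ → ℕ → Option (ZMod q)
  | 0, _, _ => none
  | m + 1, r, c =>
    if c = 0 then some (Nat.cast (r / Nrows q m))
    else if (c - 1) / Ncols q m = r / Nrows q m then
      fractalEntry q m (r % Nrows q m) ((c - 1) % Ncols q m)
    else none

/-- The fractal star matrix `M_{q,m}`. -/
def fractalMatrix (q m : ℕ) : Fin (Nrows q m) → Fin (Ncols q m) → Option (ZMod q) :=
  fun r c => fractalEntry q m r.1 c.1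

lemma Nrows_pos (q m : ℕ) (hq : 1 ≤ q) : 0 < Nrows q m := by
  induction m with
  | zero => simp [Nrows]
  | succ m ih => simpa [Nrows] using Nat.mul_pos hq ih

lemma filter_div_eq (N qq j : ℕ) (hN : 0 < N) (hj : j < qq) :
    ((Finset.range (qq * N)).filter (fun r => r / N = j)).card = N := by
  have h : ((Finset.range (qq * N)).filter (fun r => r / N = j))
      = Finset.Ico (j * N) (j * N + N) := by
    ext r
    simp only [Finset.mem_filter, Finset.mem_range, Finset.mem_Ico]
    constructor
    · rintro ⟨hr, rfl⟩
      have h1 := Nat.div_add_mod r N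
      have h2 := Nat.mod_lt r hN
      have h3 := Nat.mul_comm N (r / N)
      omega
    · rintro ⟨h1, h2⟩
      have hd : r / N = j := Nat.div_eq_of_lt_le (by omega) (by rw [Nat.succ_mul]; omega)
      refine ⟨?_, hd⟩
      have : (j + 1) * N ≤ qq * N := Nat.mul_le_mul_right N (by omega)
      rw [Nat.succ_mul] at this
      omega
  rw [h]
  simp

lemma filter_block (N qq b0 : ℕ) (hN : 0 < N) (hb : b0 < qq) (P : ℕ → Prop)
    [DecidablePred P] :
    ((Finset.range (qq * N)).filter (fun r => r / N = b0 ∧ P (r % N))).card =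
    ((Finset.range N).filter P).card := by
  apply Finset.card_bij' (fun r _ => r % N) (fun r' _ => b0 * N + r')
  · intro r hr
    simp only [Finset.mem_filter, Finset.mem_range] at hr ⊢
    exact ⟨Nat.mod_lt r hN, hr.2.2⟩
  · intro r' hr'
    simp only [Finset.mem_filter, Finset.mem_range] at hr' ⊢
    have h1 : b0 * N + r' < qq * N := by
      have : (b0 + 1) * N ≤ qq * N := Nat.mul_le_mul_right N (by omega)
      rw [Nat.succ_mul] at this; omega
    have hd : (b0 * N + r') / N = b0 := by
      rw [Nat.mul_comm b0 N, Nat.mul_add_div hN, Nat.div_eq_of_lt hr'.1]; omega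
    have hmm : (b0 * N + r') % N = r' := by
      rw [Nat.mul_comm b0 N, Nat.mul_add_mod, Nat.mod_eq_of_lt hr'.1]
    exact ⟨h1, hd, by rw [hmm]; exact hr'.2⟩
  · intro r hr
    simp only [Finset.mem_filter, Finset.mem_range] at hr
    have h1 := Nat.div_add_mod r N
    rw [hr.2.1] at h1
    have h3 := Nat.mul_comm N b0
    omega
  · intro r' hr'
    simp only [Finset.mem_filter, Finset.mem_range] at hr'
    rw [Nat.mul_comm b0 N, Nat.mul_add_mod, Nat.mod_eq_of_lt hr'.1]

lemma cnt_zero (q m : ℕ) (hq : 2 ≤ q) (x : ZMod q) :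
    ((Finset.range (Nrows q (m + 1))).filter
      (fun r => fractalEntry q (m + 1) r 0 = some x)).card = Nrows q m := by
  haveI : NeZero q := ⟨by omega⟩
  have hN := Nrows_pos q m (by omega)
  have hcong : (Finset.range (Nrows q (m + 1))).filter
        (fun r => fractalEntry q (m + 1) r 0 = some x)
      = (Finset.range (q * Nrows q m)).filter (fun r => r / Nrows q m = x.val) := by
    show (Finset.range (q * Nrows q m)).filter _ = _
    apply Finset.filter_congr
    intro r hr
    simp only [Finset.mem_range] at hr
    have hj : r / Nrows q m < q := Nat.div_lt_iff_lt_mul hN |>.mpr (by omega)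
    have he : fractalEntry q (m + 1) r 0 = some ((r / Nrows q m : ℕ) : ZMod q) := by
      simp [fractalEntry]
    rw [he, Option.some_inj]
    constructor
    · rintro rfl
      rw [ZMod.val_cast_of_lt hj]
    · intro h
      rw [h, ZMod.natCast_rightInverse x]
  rw [hcong, filter_div_eq _ _ _ hN (ZMod.val_lt x)]

lemma cnt_const (q : ℕ) (hq : 2 ≤ q) : ∀ m, ∀ c, c < Ncols q m → ∀ a b : ZMod q,
    ((Finset.range (Nrows q m)).filter (fun r => fractalEntry q m r c = some a)).card =
    ((Finset.range (Nrows q m)).filter (fun r => fractalEntry q m r c = some b)).card := by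
  intro m
  induction m with
  | zero => intro c hc; simp [Ncols] at hc
  | succ m ih =>
    intro c hc a b
    by_cases hc0 : c = 0
    · subst hc0
      rw [cnt_zero q m hq a, cnt_zero q m hq b]
    · have hN := Nrows_pos q m (by omega)
      have hc1 : c - 1 < q * Ncols q m := by
        simp only [Ncols] at hc; omega
      have hM : 0 < Ncols q m := by
        rcases Nat.eq_zero_or_pos (Ncols q m) with h | h
        · rw [h, Nat.mul_zero] at hc1; omega
        · exact h
      have hb0 : (c - 1) / Ncols q m < q := Nat.div_lt_iff_lt_mul hM |>.mpr (by omega)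
      have hc' : (c - 1) % Ncols q m < Ncols q m := Nat.mod_lt _ hM
      have key : ∀ x : ZMod q, (Finset.range (Nrows q (m + 1))).filter
            (fun r => fractalEntry q (m + 1) r c = some x)
          = (Finset.range (q * Nrows q m)).filter
            (fun r => r / Nrows q m = (c - 1) / Ncols q m ∧
              fractalEntry q m (r % Nrows q m) ((c - 1) % Ncols q m) = some x) := by
        intro x
        show (Finset.range (q * Nrows q m)).filter _ = _
        apply Finset.filter_congr
        intro r hr
        by_cases h : (c - 1) / Ncols q m = r / Nrows q m
        · simp [fractalEntry, hc0, h]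
        · have h2 : ¬ (r / Nrows q m = (c - 1) / Ncols q m) := fun h' => h h'.symm
          simp [fractalEntry, hc0, h, h2]
      rw [key a, key b,
        filter_block (Nrows q m) q _ hN hb0
          (fun r' => fractalEntry q m r' ((c - 1) % Ncols q m) = some a),
        filter_block (Nrows q m) q _ hN hb0
          (fun r' => fractalEntry q m r' ((c - 1) % Ncols q m) = some b)]
      exact ih _ hc' a b

lemma card_isSome_sum (q N : ℕ) [NeZero q] (f : ℕ → Option (ZMod q)) :
    ((Finset.range N).filter (fun r => (f r).isSome)).card =
    ∑ a : ZMod q, ((Finset.range N).filter (fun r => f r = some a)).card := by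
  classical
  rw [Finset.card_eq_sum_card_fiberwise
    (f := fun r => (f r).iget) (t := Finset.univ) (fun x _ => Finset.mem_univ _)]
  apply Finset.sum_congr rfl
  intro a _
  congr 1
  ext r
  simp only [Finset.filter_filter, Finset.mem_filter, Finset.mem_range]
  constructor
  · rintro ⟨hr, hs, hg⟩
    rcases Option.isSome_iff_exists.mp hs with ⟨x, hx⟩
    refine ⟨hr, ?_⟩
    rw [hx] at hg ⊢
    replace hg : x = a := hg
    rw [hg]
  · rintro ⟨hr, hx⟩
    exact ⟨hr, by simp [hx], by simp [hx]⟩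

lemma natCard_fin_filter {N : ℕ} (P : ℕ → Prop) [DecidablePred P] :
    Nat.card {r : Fin N // P r.1} = ((Finset.range N).filter P).card := by
  rw [Nat.card_eq_fintype_card, Fintype.card_subtype]
  apply Finset.card_bij (fun r _ => r.1)
  · intro r hr
    simp only [Finset.mem_filter, Finset.mem_univ, true_and] at hr
    simp only [Finset.mem_filter, Finset.mem_range]
    exact ⟨r.2, hr⟩
  · intro r₁ _ r₂ _ h
    exact Fin.ext h
  · intro r hr
    simp only [Finset.mem_filter, Finset.mem_range] at hr
    exact ⟨⟨r, hr.1⟩, by simpa using hr.2, rfl⟩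


/-- Every column of `M_{q,m}` contains each value of `Z_q` the same number of times;
if its size (number of numerical entries) is `q^k`, each value occurs `q^(k-1)` times. -/
theorem stmt8 (q m : ℕ) (hq : 2 ≤ q) (hm : 1 ≤ m) (c : Fin (Ncols q m)) :
    (∀ a b : ZMod q,
      Nat.card {r : Fin (Nrows q m) // fractalMatrix q m r c = some a} =
        Nat.card {r : Fin (Nrows q m) // fractalMatrix q m r c = some b}) ∧
    (∀ k : ℕ,
      Nat.card {r : Fin (Nrows q m) // (fractalMatrix q m r c).isSome} = q ^ k →
      ∀ a : ZMod q,
        Nat.card {r : Fin (Nrows q m) // fractalMatrix q m r c = some a} = q ^ (k - 1)) := by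
  haveI : NeZero q := ⟨by omega⟩
  have h1 : ∀ x : ZMod q,
      Nat.card {r : Fin (Nrows q m) // fractalMatrix q m r c = some x} =
      ((Finset.range (Nrows q m)).filter
        (fun r => fractalEntry q m r c.1 = some x)).card := fun x =>
    natCard_fin_filter (fun r => fractalEntry q m r c.1 = some x)
  have h2 : Nat.card {r : Fin (Nrows q m) // (fractalMatrix q m r c).isSome} =
      ((Finset.range (Nrows q m)).filter
        (fun r => (fractalEntry q m r c.1).isSome)).card :=
    natCard_fin_filter (fun r => (fractalEntry q m r c.1).isSome)
  constructor
  · intro a b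
    rw [h1 a, h1 b]
    exact cnt_const q hq m c.1 c.2 a b
  · intro k hk a
    rw [h1 a]
    rw [h2, card_isSome_sum q _] at hk
    set t := ((Finset.range (Nrows q m)).filter
      (fun r => fractalEntry q m r c.1 = some a)).card with ht
    have hsum : (∑ b : ZMod q, ((Finset.range (Nrows q m)).filter
        (fun r => fractalEntry q m r c.1 = some b)).card) = q * t := by
      rw [Finset.sum_congr rfl (fun b _ => cnt_const q hq m c.1 c.2 b a)]
      rw [Finset.sum_const, Finset.card_univ, ZMod.card, smul_eq_mul]
    rw [hsum] at hk
    cases k with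
    | zero =>
      exfalso
      rw [pow_zero] at hk
      have : q ∣ 1 := ⟨t, hk.symm⟩
      have := Nat.le_of_dvd one_pos this
      omega
    | succ k' =>
      have : q * q ^ k' = q * t := by rw [hk, pow_succ']
      have := Nat.eq_of_mul_eq_mul_left (by omega) this
      simpa using this.symm
end

section
/- Let M be the star matrix of an A-primitive partition of Z_q^n into q^m subcubes of dimension n-m, let column i of M and value a ∈ Z_q be chosen, and let M' be the star matrix obtained by the bang operation on column i with value a. Then M' is the star matrix of an A-primitive partition into q^m subcubes of equal dimension; in particular M' has q^m rows and the total number of numerical entries of M' equals that of M (namely m·q^m). -/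
/-- Row index type of the matrix obtained by the bang of `M` at column `i` with value
`a`: rows with a star in column `i` survive, rows with value `a` in column `i` are
replaced by `q` copies, all other rows are deleted. -/
def BangRow {q : ℕ} {R : Type} {n : ℕ} (M : R → Fin n → Option (ZMod q))
    (i : Fin n) (a : ZMod q) : Type :=
  {r : R // M r i = none} ⊕ ({r : R // M r i = some a} × ZMod q)

/-- Column index type before removing all-star columns: the old columns other than `i`,
together with one new column for every row of `M` having value `a` in column `i`. -/
def BangCol0 {q : ℕ} {R : Type} {n : ℕ} (M : R → Fin n → Option (ZMod q))
    (i : Fin n) (a : ZMod q) : Type :=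
  {c : Fin n // c ≠ i} ⊕ {r : R // M r i = some a}

/-- The matrix after the bang, before removing all-star columns: old entries are kept,
and the new column attached to a split row contains each value of `Z_q` exactly once
within the block of its `q` copies, and stars elsewhere. -/
def bangPre {q : ℕ} {R : Type} [DecidableEq R] {n : ℕ} (M : R → Fin n → Option (ZMod q))
    (i : Fin n) (a : ZMod q) : BangRow M i a → BangCol0 M i a → Option (ZMod q)
  | Sum.inl ⟨r, _⟩, Sum.inl ⟨c, _⟩ => M r c
  | Sum.inl _, Sum.inr _ => none
  | Sum.inr (⟨r, _⟩, _), Sum.inl ⟨c, _⟩ => M r c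
  | Sum.inr (⟨r, _⟩, k), Sum.inr ⟨r', _⟩ => if r = r' then some k else none

/-- Columns of the banged matrix: the columns of `bangPre` that are not all-star. -/
def BangCol {q : ℕ} {R : Type} [DecidableEq R] {n : ℕ} (M : R → Fin n → Option (ZMod q))
    (i : Fin n) (a : ZMod q) : Type :=
  {c : BangCol0 M i a // ∃ ρ : BangRow M i a, (bangPre M i a ρ c).isSome}

/-- The star matrix obtained by the bang of `M` at column `i` with value `a`. -/
def bangMatrix {q : ℕ} {R : Type} [DecidableEq R] {n : ℕ} (M : R → Fin n → Option (ZMod q))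
    (i : Fin n) (a : ZMod q) : BangRow M i a → BangCol M i a → Option (ZMod q) :=
  fun ρ c => bangPre M i a ρ c.1

noncomputable def subcubeEquiv {q : ℕ} {C : Type} (p : C → Option (ZMod q)) :
    Subcube p ≃ ({c : C // p c = none} → ZMod q) where
  toFun x c := x.1 c.1
  invFun g := ⟨fun c => if h : (p c).isSome then (p c).get h
      else g ⟨c, Option.not_isSome_iff_eq_none.mp h⟩,
    fun c v hcv => by
      have h : (p c).isSome := by rw [hcv]; rfl
      simp only [dif_pos h]
      exact Option.get_of_mem h hcv⟩
  left_inv x := Subtype.ext (funext fun c => by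
    dsimp only
    split
    · next h => exact (x.2 c _ (Option.some_get h).symm).symm
    · rfl)
  right_inv g := funext fun c => by
    have h : ¬ (p c.1).isSome := by rw [c.2]; simp
    simp only [dif_neg h]

lemma subcube_card_aux {q : ℕ} [NeZero q] {C : Type} [Finite C] (p : C → Option (ZMod q)) :
    numCount p ≤ Nat.card C ∧
      Nat.card (Subcube p) = q ^ (Nat.card C - numCount p) := by
  classical
  have hsum : numCount p + Nat.card {c : C // ¬ (p c).isSome} = Nat.card C := by
    rw [numCount, ← Nat.card_sum]
    exact Nat.card_congr (Equiv.sumCompl fun c => (p c).isSome)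
  have hnone : Nat.card {c : C // p c = none} = Nat.card C - numCount p := by
    rw [Nat.card_congr (Equiv.subtypeEquivRight
      (fun c => Option.not_isSome_iff_eq_none.symm : ∀ c : C, p c = none ↔ ¬(p c).isSome)),
      ← hsum, Nat.add_sub_cancel_left]
  constructor
  · omega
  · rw [Nat.card_congr (subcubeEquiv p), Nat.card_fun, Nat.card_zmod, hnone]


section Aux

variable {q : ℕ} {R : Type} [DecidableEq R] {n : ℕ}
  {M : R → Fin n → Option (ZMod q)} {i : Fin n} {a : ZMod q}

def rowOf (ρ : BangRow M i a) : R := Sum.elim Subtype.val (fun p => p.1.1) ρ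

lemma bangPre_inl (ρ : BangRow M i a) (c : Fin n) (hc : c ≠ i) :
    bangPre M i a ρ (Sum.inl ⟨c, hc⟩) = M (rowOf ρ) c := by
  rcases ρ with ⟨r, hr⟩ | ⟨⟨r, hr⟩, k⟩ <;> rfl

lemma bangPre_ll (r : R) (hr : M r i = none) (b : {r : R // M r i = some a}) :
    bangPre M i a (Sum.inl ⟨r, hr⟩) (Sum.inr b) = none := rfl

lemma bangPre_rr (r : R) (hr : M r i = some a) (k : ZMod q) (b : {r : R // M r i = some a}) :
    bangPre M i a (Sum.inr (⟨r, hr⟩, k)) (Sum.inr b) = if r = b.1 then some k else none := rfl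


lemma numCount_bang (ρ : BangRow M i a) :
    numCount (bangMatrix M i a ρ)
      = Nat.card {c : BangCol0 M i a // (bangPre M i a ρ c).isSome} :=
  Nat.card_congr
    { toFun := fun c => ⟨c.1.1, c.2⟩
      invFun := fun c => ⟨⟨c.1, ρ, c.2⟩, c.2⟩
      left_inv := fun c => Subtype.ext (Subtype.ext rfl)
      right_inv := fun c => rfl }

lemma card_inl (r : R) (hr : M r i = none) :
    Nat.card {c : BangCol0 M i a // (bangPre M i a (Sum.inl ⟨r, hr⟩) c).isSome}
      = numCount (M r) := by
  classical
  rw [numCount]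
  haveI : IsEmpty {b : {r' : R // M r' i = some a} //
      (bangPre M i a (Sum.inl ⟨r, hr⟩) (Sum.inr b)).isSome} :=
    ⟨fun b => by have := b.2; rw [bangPre_ll] at this; simp at this⟩
  have e1 : {c : BangCol0 M i a // (bangPre M i a (Sum.inl ⟨r, hr⟩) c).isSome}
      ≃ {c : {c : Fin n // c ≠ i} // (bangPre M i a (Sum.inl ⟨r, hr⟩) (Sum.inl c)).isSome} :=
    Equiv.subtypeSum.trans (Equiv.sumEmpty _ _)
  have e2 : {c : {c : Fin n // c ≠ i} // (bangPre M i a (Sum.inl ⟨r, hr⟩) (Sum.inl c)).isSome}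
      ≃ {c : Fin n // c ≠ i ∧ (M r c).isSome} := by
    refine (Equiv.subtypeEquivRight (fun c => ?_)).trans
      (Equiv.subtypeSubtypeEquivSubtypeInter (fun c : Fin n => c ≠ i) (fun c => (M r c).isSome))
    rw [show bangPre M i a (Sum.inl ⟨r, hr⟩) (Sum.inl c) = M r c.1 from bangPre_inl _ c.1 c.2]
  have e3 : {c : Fin n // c ≠ i ∧ (M r c).isSome} ≃ {c : Fin n // (M r c).isSome} :=
    Equiv.subtypeEquivRight (fun c => ⟨And.right, fun h => ⟨fun hci => by
      rw [hci, hr] at h; simp at h, h⟩⟩)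
  exact Nat.card_congr ((e1.trans e2).trans e3)



lemma card_inr (r : R) (hr : M r i = some a) (k : ZMod q) :
    Nat.card {c : BangCol0 M i a // (bangPre M i a (Sum.inr (⟨r, hr⟩, k)) c).isSome}
      = numCount (M r) := by
  classical
  set ρ : BangRow M i a := Sum.inr (⟨r, hr⟩, k) with hρ
  -- right summand of the bang side is a singleton
  haveI hu : Unique {b : {r' : R // M r' i = some a} //
      (bangPre M i a ρ (Sum.inr b)).isSome} :=
    { default := ⟨⟨r, hr⟩, by rw [bangPre_rr, if_pos rfl]; rfl⟩
      uniq := by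
        rintro ⟨⟨r', hr'⟩, h⟩
        rw [bangPre_rr] at h
        by_cases hrr : r = r'
        · exact Subtype.ext (Subtype.ext hrr.symm)
        · rw [if_neg hrr] at h; simp at h }
  -- split the bang side
  have e1 : {c : BangCol0 M i a // (bangPre M i a ρ c).isSome}
      ≃ ({c : {c : Fin n // c ≠ i} // (bangPre M i a ρ (Sum.inl c)).isSome} ⊕
         {b : {r' : R // M r' i = some a} // (bangPre M i a ρ (Sum.inr b)).isSome}) :=
    Equiv.subtypeSum
  have e2 : {c : {c : Fin n // c ≠ i} // (bangPre M i a ρ (Sum.inl c)).isSome}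
      ≃ {c : Fin n // c ≠ i ∧ (M r c).isSome} := by
    refine (Equiv.subtypeEquivRight (fun c => ?_)).trans
      (Equiv.subtypeSubtypeEquivSubtypeInter (fun c : Fin n => c ≠ i) (fun c => (M r c).isSome))
    rw [bangPre_inl]
    rfl
  -- split the old side
  have e4 : {c : Fin n // (M r c).isSome}
      ≃ ({x : {c : Fin n // (M r c).isSome} // x.1 ≠ i} ⊕
         {x : {c : Fin n // (M r c).isSome} // ¬ x.1 ≠ i}) :=
    (Equiv.sumCompl (fun x : {c : Fin n // (M r c).isSome} => x.1 ≠ i)).symm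
  have e5 : {x : {c : Fin n // (M r c).isSome} // x.1 ≠ i}
      ≃ {c : Fin n // (M r c).isSome ∧ c ≠ i} :=
    Equiv.subtypeSubtypeEquivSubtypeInter (fun c : Fin n => (M r c).isSome = true)
      (fun c : Fin n => c ≠ i)
  haveI hu2 : Unique {x : {c : Fin n // (M r c).isSome} // ¬ x.1 ≠ i} :=
    { default := ⟨⟨i, by rw [hr]; rfl⟩, by simp⟩
      uniq := by
        rintro ⟨⟨c, h⟩, hc⟩
        have : c = i := by simpa using hc
        exact Subtype.ext (Subtype.ext this) }
  have hL : Nat.card {c : BangCol0 M i a // (bangPre M i a ρ c).isSome}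
      = Nat.card {c : Fin n // (M r c).isSome ∧ c ≠ i} + 1 := by
    rw [Nat.card_congr (e1.trans (Equiv.sumCongr
      (e2.trans (Equiv.subtypeEquivRight (fun c => and_comm))) (Equiv.refl _))),
      Nat.card_sum, Nat.card_unique (α := {b : {r' : R // M r' i = some a} //
        (bangPre M i a ρ (Sum.inr b)).isSome})]
  have hR : numCount (M r) = Nat.card {c : Fin n // (M r c).isSome ∧ c ≠ i} + 1 := by
    rw [numCount, Nat.card_congr (e4.trans (Equiv.sumCongr e5 (Equiv.refl _))),
      Nat.card_sum, Nat.card_unique (α := {x : {c : Fin n // (M r c).isSome} // ¬ x.1 ≠ i})]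
  rw [hL, hR]


lemma mem_old (y : BangCol M i a → ZMod q) (x : Fin n → ZMod q)
    (hxi : x i = a)
    (hx : ∀ (c : Fin n) (hc : c ≠ i) (h : ∃ ρ, (bangPre M i a ρ (Sum.inl ⟨c, hc⟩)).isSome),
      x c = y ⟨Sum.inl ⟨c, hc⟩, h⟩)
    (ρ : BangRow M i a) (hy : y ∈ Subcube (bangMatrix M i a ρ)) :
    x ∈ Subcube (M (rowOf ρ)) := by
  intro c v hcv
  by_cases hc : c = i
  · subst hc
    rcases ρ with ⟨r, hr⟩ | ⟨⟨r, hr⟩, k⟩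
    · simp only [rowOf, Sum.elim_inl] at hcv
      rw [hr] at hcv; cases hcv
    · simp only [rowOf, Sum.elim_inr] at hcv
      rw [hr] at hcv
      rw [hxi, (Option.some.inj hcv)]
  · have hpre : bangPre M i a ρ (Sum.inl ⟨c, hc⟩) = some v := by
      rw [bangPre_inl]; exact hcv
    have hwit : ∃ ρ', (bangPre M i a ρ' (Sum.inl ⟨c, hc⟩)).isSome :=
      ⟨ρ, by rw [hpre]; rfl⟩
    rw [hx c hc hwit]
    exact hy ⟨Sum.inl ⟨c, hc⟩, hwit⟩ v hpre

lemma mem_new_inl (y : BangCol M i a → ZMod q) (x : Fin n → ZMod q)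
    (hx : ∀ (c : Fin n) (hc : c ≠ i) (h : ∃ ρ, (bangPre M i a ρ (Sum.inl ⟨c, hc⟩)).isSome),
      x c = y ⟨Sum.inl ⟨c, hc⟩, h⟩)
    (r : R) (hr : M r i = none) (hxr : x ∈ Subcube (M r)) :
    y ∈ Subcube (bangMatrix M i a (Sum.inl ⟨r, hr⟩)) := by
  rintro ⟨c, hcol⟩ v hv
  rcases c with ⟨c₀, hne⟩ | b
  · have hv' : M r c₀ = some v := hv
    rw [← hx c₀ hne hcol]
    exact hxr c₀ v hv'
  · cases (hv : (none : Option (ZMod q)) = some v)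

lemma mem_new_inr (y : BangCol M i a → ZMod q) (x : Fin n → ZMod q)
    (hx : ∀ (c : Fin n) (hc : c ≠ i) (h : ∃ ρ, (bangPre M i a ρ (Sum.inl ⟨c, hc⟩)).isSome),
      x c = y ⟨Sum.inl ⟨c, hc⟩, h⟩)
    (r : R) (hr : M r i = some a) (hxr : x ∈ Subcube (M r))
    (hcol0 : ∃ ρ, (bangPre M i a ρ (Sum.inr ⟨r, hr⟩)).isSome) :
    y ∈ Subcube (bangMatrix M i a
      (Sum.inr (⟨r, hr⟩, y ⟨Sum.inr ⟨r, hr⟩, hcol0⟩))) := by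
  rintro ⟨c, hcol⟩ v hv
  rcases c with ⟨c₀, hne⟩ | ⟨r', hr'⟩
  · have hv' : M r c₀ = some v := hv
    rw [← hx c₀ hne hcol]
    exact hxr c₀ v hv'
  · have hv' : (if r = r' then some (y ⟨Sum.inr ⟨r, hr⟩, hcol0⟩) else none) = some v := hv
    by_cases hrr : r = r'
    · subst hrr
      rw [if_pos rfl] at hv'
      exact Option.some.inj hv'
    · rw [if_neg hrr] at hv'
      cases hv'

lemma card_pi_eq_sum {q : ℕ} {R C : Type} [Fintype R] [Finite C] [NeZero q]
    (P : R → C → Option (ZMod q)) (h : IsPartitionMatrix q P) :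
    Nat.card (C → ZMod q) = ∑ r : R, Nat.card (Subcube (P r)) := by
  classical
  have e : (Σ r : R, Subcube (P r)) ≃ (C → ZMod q) := by
    apply Equiv.ofBijective (fun s => (s.2 : C → ZMod q))
    constructor
    · rintro ⟨r, x, hx⟩ ⟨r', x', hx'⟩ heq
      dsimp at heq
      obtain rfl : x = x' := heq
      obtain rfl : r = r' := by
        by_contra hrr
        have hmem : x ∈ Subcube (P r) ∩ Subcube (P r') := ⟨hx, hx'⟩
        rw [h.1 r r' hrr] at hmem
        exact absurd hmem (Set.notMem_empty x)
      rfl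
    · intro x
      obtain ⟨r, hr⟩ := h.2 x
      exact ⟨⟨r, x, hr⟩, rfl⟩
  haveI : ∀ r : R, Fintype (Subcube (P r)) := fun r => Fintype.ofFinite _
  haveI : Fintype (C → ZMod q) := Fintype.ofFinite _
  rw [← Nat.card_congr e, Nat.card_eq_fintype_card, Fintype.card_sigma]
  simp [Nat.card_eq_fintype_card]

end Aux

/-- The bang of an A-primitive partition star matrix is again the star matrix of an
A-primitive partition into `q^m` subcubes of equal dimension; in particular it has `q^m`
rows and the same total number `m * q^m` of numerical entries. -/
theorem stmt13 (q n m : ℕ) (hq : 2 ≤ q) (hmn : m ≤ n)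
    (M : Fin (q ^ m) → Fin n → Option (ZMod q))
    (hpart : IsPartitionMatrix q M)
    (hrows : ∀ r, numCount (M r) = m)
    (hprim : APrimitive M)
    (i : Fin n) (a : ZMod q) :
    IsPartitionMatrix q (bangMatrix M i a) ∧
    APrimitive (bangMatrix M i a) ∧
    Nat.card (BangRow M i a) = q ^ m ∧
    (∃ m' : ℕ, ∀ ρ : BangRow M i a, numCount (bangMatrix M i a ρ) = m') ∧
    (∑ᶠ ρ : BangRow M i a, numCount (bangMatrix M i a ρ)) = m * q ^ m := by
  classical
  haveI : NeZero q := ⟨by omega⟩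
  haveI hFR : Finite (BangRow M i a) := by unfold BangRow; infer_instance
  haveI hFC0 : Finite (BangCol0 M i a) := by unfold BangCol0; infer_instance
  haveI hFC : Finite (BangCol M i a) := by unfold BangCol; exact Subtype.finite
  haveI : Fintype (BangRow M i a) := Fintype.ofFinite _
  -- all rows of the banged matrix have m numerical entries
  have hnum : ∀ ρ : BangRow M i a, numCount (bangMatrix M i a ρ) = m := by
    intro ρ
    rw [numCount_bang]
    rcases ρ with ⟨r, hr⟩ | ⟨⟨r, hr⟩, k⟩
    · rw [card_inl]; exact hrows r
    · rw [card_inr]; exact hrows r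
  -- the banged matrix is a partition matrix
  have hP : IsPartitionMatrix q (bangMatrix M i a) := by
    constructor
    · rintro ρ ρ' hne
      rw [Set.eq_empty_iff_forall_notMem]
      rintro y ⟨hy, hy'⟩
      set x : Fin n → ZMod q := fun c =>
        if hc : c = i then a
        else if h : ∃ ρ₀, (bangPre M i a ρ₀ (Sum.inl ⟨c, hc⟩)).isSome
          then y ⟨Sum.inl ⟨c, hc⟩, h⟩ else 0 with hxdef
      have hxi : x i = a := by simp [hxdef]
      have hx : ∀ (c : Fin n) (hc : c ≠ i)
          (h : ∃ ρ₀, (bangPre M i a ρ₀ (Sum.inl ⟨c, hc⟩)).isSome),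
          x c = y ⟨Sum.inl ⟨c, hc⟩, h⟩ := by
        intro c hc h
        simp only [hxdef, dif_neg hc, dif_pos h]
      have h1 := mem_old y x hxi hx ρ hy
      have h2 := mem_old y x hxi hx ρ' hy'
      by_cases hrr : rowOf ρ = rowOf ρ'
      · rcases ρ with ⟨r, hr⟩ | ⟨⟨r, hr⟩, k⟩ <;>
          rcases ρ' with ⟨r2, hr2⟩ | ⟨⟨r2, hr2⟩, k2⟩ <;>
          simp only [rowOf, Sum.elim_inl, Sum.elim_inr] at hrr
        · exact hne (by cases hrr; rfl)
        · subst hrr; rw [hr] at hr2; cases hr2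
        · subst hrr; rw [hr] at hr2; cases hr2
        · subst hrr
          have hk : k ≠ k2 := fun h => hne (by cases h; rfl)
          have wit : ∃ ρ₀, (bangPre M i a ρ₀ (Sum.inr ⟨r, hr⟩)).isSome :=
            ⟨Sum.inr (⟨r, hr⟩, k), by rw [bangPre_rr, if_pos rfl]; rfl⟩
          have e1 := hy ⟨Sum.inr ⟨r, hr⟩, wit⟩ k
            (by show bangPre _ _ _ _ _ = _; rw [bangPre_rr, if_pos rfl])
          have e2 := hy' ⟨Sum.inr ⟨r, hr⟩, wit⟩ k2
            (by show bangPre _ _ _ _ _ = _; rw [bangPre_rr, if_pos rfl])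
          exact hk (e1.symm.trans e2)
      · have hmem : x ∈ Subcube (M (rowOf ρ)) ∩ Subcube (M (rowOf ρ')) := ⟨h1, h2⟩
        rw [hpart.1 _ _ hrr] at hmem
        exact absurd hmem (Set.notMem_empty x)
    · intro y
      set x : Fin n → ZMod q := fun c =>
        if hc : c = i then a
        else if h : ∃ ρ₀, (bangPre M i a ρ₀ (Sum.inl ⟨c, hc⟩)).isSome
          then y ⟨Sum.inl ⟨c, hc⟩, h⟩ else 0 with hxdef
      have hxi : x i = a := by simp [hxdef]
      have hx : ∀ (c : Fin n) (hc : c ≠ i)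
          (h : ∃ ρ₀, (bangPre M i a ρ₀ (Sum.inl ⟨c, hc⟩)).isSome),
          x c = y ⟨Sum.inl ⟨c, hc⟩, h⟩ := by
        intro c hc h
        simp only [hxdef, dif_neg hc, dif_pos h]
      obtain ⟨r, hxr⟩ := hpart.2 x
      cases hM : M r i with
      | none => exact ⟨Sum.inl ⟨r, hM⟩, mem_new_inl y x hx r hM hxr⟩
      | some b =>
        have hb : b = a := by
          have := hxr i b hM
          rw [hxi] at this
          exact this.symm
        rw [hb] at hM
        have wit : ∃ ρ₀, (bangPre M i a ρ₀ (Sum.inr ⟨r, hM⟩)).isSome :=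
          ⟨Sum.inr (⟨r, hM⟩, 0), by rw [bangPre_rr, if_pos rfl]; rfl⟩
        exact ⟨Sum.inr (⟨r, hM⟩, y ⟨Sum.inr ⟨r, hM⟩, wit⟩),
          mem_new_inr y x hx r hM hxr wit⟩
  -- A-primitivity
  have hApr : APrimitive (bangMatrix M i a) := fun c => c.2
  -- nonemptiness of the row type
  have hnonempty : Nonempty (BangRow M i a) := by
    obtain ⟨r, hr⟩ := hpart.2 (fun c => if c = i then a else 0)
    cases hM : M r i with
    | none => exact ⟨Sum.inl ⟨r, hM⟩⟩
    | some b =>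
      have hba : b = a := by have := hr i b hM; simpa using this.symm
      rw [hba] at hM
      exact ⟨Sum.inr (⟨r, hM⟩, 0)⟩
  obtain ⟨ρ₀⟩ := hnonempty
  set N := Nat.card (BangCol M i a) with hN
  have hmN : m ≤ N := by
    have := (subcube_card_aux (bangMatrix M i a ρ₀)).1
    rwa [hnum ρ₀] at this
  -- cardinality count
  have hcard : Nat.card (BangRow M i a) = q ^ m := by
    have hsum := card_pi_eq_sum (bangMatrix M i a) hP
    have hL : Nat.card (BangCol M i a → ZMod q) = q ^ N := by
      rw [Nat.card_fun, Nat.card_zmod]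
    have hR : ∑ ρ : BangRow M i a, Nat.card (Subcube (bangMatrix M i a ρ))
        = Nat.card (BangRow M i a) * q ^ (N - m) := by
      rw [Finset.sum_congr rfl (fun ρ _ => by
        rw [(subcube_card_aux (bangMatrix M i a ρ)).2, hnum ρ]),
        Finset.sum_const, Finset.card_univ, smul_eq_mul,
        Nat.card_eq_fintype_card (α := BangRow M i a)]
    have key : Nat.card (BangRow M i a) * q ^ (N - m) = q ^ m * q ^ (N - m) := by
      rw [← hR, ← hsum, hL, ← pow_add, Nat.add_sub_cancel' hmN]
    exact Nat.eq_of_mul_eq_mul_right (pow_pos (by omega) _) key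
  refine ⟨hP, hApr, hcard, ⟨m, hnum⟩, ?_⟩
  rw [finsum_eq_sum_of_fintype]
  rw [Finset.sum_congr rfl (fun ρ _ => hnum ρ), Finset.sum_const, Finset.card_univ,
    smul_eq_mul, ← Nat.card_eq_fintype_card (α := BangRow M i a), hcard, mul_comm]
end
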